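/- Equivalence of the continuous and discrete ODE preconditions for open B and open Q: let p_{x₀} be the unique solution of ẋ = e from x₀, f_{x₀,h} its piecewise-linear Euler approximation with step h, B an open predicate on states and Q an open predicate on (state, trace) pairs, tr a fixed trace, and ∅ the empty ready set. Then the condition (CP): 'for all d > 0, if B(p_{x₀}(t)) for all t ∈ [0,d) and ¬B(p_{x₀}(d)), then Q(p_{x₀}(d), tr⌢⟨d, p_{x₀}, ∅⟩)' is equivalent to the discrete condition (DP): 'for all T > 0, if for all 0 ≤ t < T there is ε₀ > 0 such that for all 0 < ε < ε₀ there is h₀ > 0 such that for all 0 < h < h₀, f_{x₀,h}(t) ∈ U_{−ε}(B), then there exists ε₀ > 0 such that for all 0 < ε < ε₀ there is h₀ > 0 such that for all 0 < h < h₀: if f_{x₀,h}(T) ∉ U_{−ε}(B) then (f_{x₀,h}(T), tr⌢⟨T, f_{x₀,h}, ∅⟩) ∈ U_{−ε}(Q)'. -/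

import Mathlib

open Set

set_option autoImplicit true

inductive RdyEv : Type
  | rin  (ch : String)
  | rout (ch : String)

inductive Dir : Type
  | inp | outp | io

/-- Generalized events over a state type `σ`. -/
inductive Ev (σ : Type) : Type
  | comm (ch : String) (dir : Dir) (v : ℝ)
  | wait (d : ℝ) (p : ℝ → σ) (rdy : Set RdyEv)

/-- Two states are within distance `ε` if all coordinates differ by less
than `ε`. -/
def stClose {n : ℕ} (ε : ℝ) (s s' : EuclideanSpace ℝ (Fin n)) : Prop :=
  ∀ i, |s i - s' i| < ε

/-- Two generalized events are within distance `ε`. -/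
def evClose {n : ℕ} (ε : ℝ) : Ev (EuclideanSpace ℝ (Fin n)) →
    Ev (EuclideanSpace ℝ (Fin n)) → Prop
  | .wait d1 p1 rdy1, .wait d2 p2 rdy2 =>
      |d1 - d2| < ε ∧ (∀ t, 0 < t → t < min d1 d2 → ‖p1 t - p2 t‖ < ε) ∧
        rdy1 = rdy2
  | .comm ch1 dir1 v1, .comm ch2 dir2 v2 =>
      ch1 = ch2 ∧ dir1 = dir2 ∧ |v1 - v2| < ε
  | _, _ => False

/-- Two traces are within distance `ε` if they have the same length and
corresponding events are within `ε`. -/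
def trClose {n : ℕ} (ε : ℝ) (tr tr' : List (Ev (EuclideanSpace ℝ (Fin n)))) : Prop :=
  List.Forall₂ (evClose ε) tr tr'

/-- Membership of a state in `U_{−ε}(B)`. -/
def inUminusB {n : ℕ} (ε : ℝ) (B : EuclideanSpace ℝ (Fin n) → Prop)
    (s : EuclideanSpace ℝ (Fin n)) : Prop :=
  ∀ s', stClose ε s s' → B s'

/-- Membership of a (state, trace) pair in `U_{−ε}(Q)`. -/
def inUminusQ {n : ℕ} (ε : ℝ)
    (Q : EuclideanSpace ℝ (Fin n) → List (Ev (EuclideanSpace ℝ (Fin n))) → Prop)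
    (s : EuclideanSpace ℝ (Fin n)) (tr : List (Ev (EuclideanSpace ℝ (Fin n)))) : Prop :=
  ∀ s' tr', stClose ε s s' → trClose ε tr tr' → Q s' tr'

/-- Euler iterates. -/
noncomputable def euler {n : ℕ} (e : EuclideanSpace ℝ (Fin n) → EuclideanSpace ℝ (Fin n))
    (x0 : EuclideanSpace ℝ (Fin n)) (h : ℝ) : ℕ → EuclideanSpace ℝ (Fin n)
  | 0 => x0
  | k + 1 => euler e x0 h k + h • e (euler e x0 h k)

/-- The piecewise-linear Euler interpolant `f_{x₀,h}`. -/
noncomputable def eulerInterp {n : ℕ}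
    (e : EuclideanSpace ℝ (Fin n) → EuclideanSpace ℝ (Fin n))
    (x0 : EuclideanSpace ℝ (Fin n)) (h : ℝ) (t : ℝ) : EuclideanSpace ℝ (Fin n) :=
  let i : ℕ := ⌊t / h⌋₊
  euler e x0 h i + ((t - (i : ℝ) * h) / h) • (euler e x0 h (i + 1) - euler e x0 h i)


open Metric Real NNReal


-- coordinate bound
set_option maxHeartbeats 1000000 in
lemma euclid_abs_sub_le {n : ℕ} (x y : EuclideanSpace ℝ (Fin n)) (i : Fin n) :
    |x i - y i| ≤ ‖x - y‖ := by
  rw [← dist_eq_norm, EuclideanSpace.dist_eq, ← Real.dist_eq]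
  have h1 : dist (x i) (y i) ^ 2 ≤ ∑ j, dist (x j) (y j) ^ 2 :=
    Finset.single_le_sum (f := fun j => dist (x j) (y j) ^ 2)
      (fun j _ => by positivity) (Finset.mem_univ i)
  calc dist (x i) (y i) = Real.sqrt (dist (x i) (y i) ^ 2) :=
        (Real.sqrt_sq dist_nonneg).symm
    _ ≤ _ := Real.sqrt_le_sqrt h1

-- locally Lipschitz implies Lipschitz on compacts
lemma exists_lipschitzOnWith_of_isCompact {n : ℕ}
    {f : EuclideanSpace ℝ (Fin n) → EuclideanSpace ℝ (Fin n)}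
    (hf : LocallyLipschitz f) {K : Set (EuclideanSpace ℝ (Fin n))} (hK : IsCompact K) :
    ∃ C : ℝ≥0, LipschitzOnWith C f K := by
  rcases K.eq_empty_or_nonempty with rfl | hne
  · exact ⟨0, lipschitzOnWith_empty _ _⟩
  have hloc : ∀ x : EuclideanSpace ℝ (Fin n), ∃ r : ℝ, 0 < r ∧
      ∃ C : ℝ≥0, LipschitzOnWith C f (Metric.ball x r) := by
    intro x
    obtain ⟨C, t, ht, hC⟩ := hf x
    obtain ⟨r, hr, hball⟩ := Metric.mem_nhds_iff.1 ht
    exact ⟨r, hr, C, hC.mono hball⟩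
  choose r hr C hC using hloc
  obtain ⟨t, hts, hcov⟩ := hK.elim_nhds_subcover (fun x => Metric.ball x (r x / 2))
    (fun x _ => Metric.ball_mem_nhds x (by linarith [hr x]))
  have hne' : t.Nonempty := by
    obtain ⟨x, hx⟩ := hne
    obtain ⟨z, hz, _⟩ := Set.mem_iUnion₂.1 (hcov hx)
    exact ⟨z, hz⟩
  set r₀ : ℝ := t.inf' hne' (fun z => r z / 2) with hr₀def
  have hr₀ : 0 < r₀ := by
    rw [hr₀def, Finset.lt_inf'_iff]
    exact fun z _ => by linarith [hr z]
  obtain ⟨M, hM⟩ : ∃ M, ∀ x ∈ K, ∀ y ∈ K, dist (f x) (f y) ≤ M := by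
    obtain ⟨Cb, hCb⟩ := Metric.isBounded_iff.1 (hK.image hf.continuous).isBounded
    exact ⟨Cb, fun x hx y hy => hCb (Set.mem_image_of_mem f hx) (Set.mem_image_of_mem f hy)⟩
  have hM0 : 0 ≤ M := by
    obtain ⟨x, hx⟩ := hne
    simpa using hM x hx x hx
  set L₀ : ℝ≥0 := t.sup' hne' C with hL₀def
  set Cr : ℝ := max (L₀ : ℝ) (M / r₀) with hCrdef
  have hCr0 : 0 ≤ Cr := le_trans (L₀.coe_nonneg) (le_max_left _ _)
  refine ⟨Cr.toNNReal, LipschitzOnWith.of_dist_le_mul ?_⟩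
  intro x hx y hy
  rw [Real.coe_toNNReal _ hCr0]
  by_cases hd : dist x y < r₀
  · obtain ⟨z, hz, hxz⟩ := Set.mem_iUnion₂.1 (hcov hx)
    have hxz' : x ∈ Metric.ball z (r z) := by
      rw [Metric.mem_ball] at hxz ⊢; linarith [hr z]
    have hyz : y ∈ Metric.ball z (r z) := by
      rw [Metric.mem_ball] at hxz ⊢
      have hr₀le : r₀ ≤ r z / 2 := Finset.inf'_le _ hz
      calc dist y z ≤ dist y x + dist x z := dist_triangle _ _ _
        _ < r₀ + r z / 2 := by rw [dist_comm y x]; exact add_lt_add hd hxz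
        _ ≤ r z := by linarith
    have := (hC z).dist_le_mul x hxz' y hyz
    have hCz : (C z : ℝ) ≤ Cr := le_trans (by exact_mod_cast Finset.le_sup' (f := C) hz)
      (le_max_left _ _)
    calc dist (f x) (f y) ≤ (C z : ℝ) * dist x y := this
      _ ≤ Cr * dist x y := mul_le_mul_of_nonneg_right hCz dist_nonneg
  · push_neg at hd
    have h1 : M ≤ (M / r₀) * dist x y := by
      rw [div_mul_eq_mul_div, le_div_iff₀ hr₀]
      exact mul_le_mul_of_nonneg_left hd hM0
    calc dist (f x) (f y) ≤ M := hM x hx y hy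
      _ ≤ (M / r₀) * dist x y := h1
      _ ≤ Cr * dist x y := mul_le_mul_of_nonneg_right (le_max_right _ _) dist_nonneg


variable {n : ℕ} {e : EuclideanSpace ℝ (Fin n) → EuclideanSpace ℝ (Fin n)}
  {x0 : EuclideanSpace ℝ (Fin n)} {h : ℝ}

lemma eulerInterp_eq_seg (hh : 0 < h) {k : ℕ} {t : ℝ}
    (h1 : (k : ℝ) * h ≤ t) (h2 : t ≤ ((k : ℝ) + 1) * h) :
    eulerInterp e x0 h t =
      euler e x0 h k + ((t - (k : ℝ) * h) / h) • (euler e x0 h (k + 1) - euler e x0 h k) := by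
  have ht0 : 0 ≤ t := le_trans (by positivity) h1
  by_cases hlt : t < ((k : ℝ) + 1) * h
  · have hfl : ⌊t / h⌋₊ = k := by
      rw [Nat.floor_eq_iff (by positivity)]
      constructor
      · rw [le_div_iff₀ hh]; exact h1
      · rw [div_lt_iff₀ hh]; exact hlt
    simp only [eulerInterp, hfl]
  · have heq : t = ((k : ℝ) + 1) * h := le_antisymm h2 (not_lt.1 hlt)
    have hfl : ⌊t / h⌋₊ = k + 1 := by
      rw [Nat.floor_eq_iff (by positivity)]
      rw [heq, mul_div_cancel_right₀ _ hh.ne']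
      push_cast
      exact ⟨le_refl _, by linarith⟩
    simp only [eulerInterp, hfl]
    have c1 : (t - ((k : ℝ) + 1) * h) / h = 0 := by rw [heq]; simp
    have c2 : (t - (k : ℝ) * h) / h = 1 := by
      rw [heq]; field_simp; ring
    push_cast [c1, c2]
    rw [zero_smul, one_smul, add_zero]
    abel

lemma eulerInterp_nat (hh : 0 < h) (k : ℕ) :
    eulerInterp e x0 h ((k : ℝ) * h) = euler e x0 h k := by
  rw [eulerInterp_eq_seg hh (le_refl _) (by nlinarith)]
  simp

lemma eulerInterp_zero (hh : 0 < h) : eulerInterp e x0 h 0 = x0 := by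
  have := eulerInterp_nat (e := e) (x0 := x0) hh 0
  simpa [euler] using this

lemma euler_succ_sub (k : ℕ) :
    euler e x0 h (k + 1) - euler e x0 h k = h • e (euler e x0 h k) := by
  simp [euler]

-- distance from segment start
lemma eulerInterp_dist_le (hh : 0 < h) {k : ℕ} {t : ℝ} {M : ℝ}
    (h1 : (k : ℝ) * h ≤ t) (h2 : t ≤ ((k : ℝ) + 1) * h)
    (hM : ‖e (euler e x0 h k)‖ ≤ M) :
    ‖eulerInterp e x0 h t - euler e x0 h k‖ ≤ h * M := by
  rw [eulerInterp_eq_seg hh h1 h2, add_sub_cancel_left, euler_succ_sub, norm_smul, norm_smul]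
  have hθ0 : 0 ≤ (t - (k : ℝ) * h) / h := div_nonneg (by linarith) hh.le
  have hθ1 : (t - (k : ℝ) * h) / h ≤ 1 := by
    rw [div_le_one hh]; linarith
  have hM0 : 0 ≤ M := le_trans (norm_nonneg _) hM
  rw [Real.norm_eq_abs, Real.norm_eq_abs, abs_of_nonneg hθ0, abs_of_nonneg hh.le]
  have hstep : (t - (k : ℝ) * h) / h * (h * ‖e (euler e x0 h k)‖) ≤ 1 * (h * M) :=
    mul_le_mul hθ1 (mul_le_mul_of_nonneg_left hM hh.le) (by positivity) zero_le_one
  linarith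

-- continuity
lemma continuousOn_union_closed {α : Type*} [TopologicalSpace α] {f : α → EuclideanSpace ℝ (Fin n)}
    {s t : Set α} (hs : IsClosed s) (ht : IsClosed t)
    (hfs : ContinuousOn f s) (hft : ContinuousOn f t) : ContinuousOn f (s ∪ t) := by
  intro x hx
  have hcs : ContinuousWithinAt f s x := by
    by_cases hxs : x ∈ s
    · exact hfs x hxs
    · exact continuousWithinAt_of_notMem_closure (by rwa [hs.closure_eq])
  have hct : ContinuousWithinAt f t x := by
    by_cases hxt : x ∈ t
    · exact hft x hxt
    · exact continuousWithinAt_of_notMem_closure (by rwa [ht.closure_eq])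
  exact hcs.union hct

lemma eulerInterp_continuousOn (hh : 0 < h) (m : ℕ) :
    ContinuousOn (eulerInterp e x0 h) (Icc 0 ((m : ℝ) * h)) := by
  induction m with
  | zero => simp [continuousOn_singleton]
  | succ m ih =>
      have hseg : ContinuousOn (eulerInterp e x0 h) (Icc ((m : ℝ) * h) (((m : ℝ) + 1) * h)) := by
        have hc : Continuous fun s : ℝ =>
            euler e x0 h m + ((s - (m : ℝ) * h) / h) • (euler e x0 h (m + 1) - euler e x0 h m) := by
          exact continuous_const.add
            ((((continuous_id.sub continuous_const).div_const h)).smul continuous_const)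
        exact hc.continuousOn.congr (fun s hs => eulerInterp_eq_seg hh hs.1 hs.2)
      have hunion : Icc (0 : ℝ) (((m : ℝ) + 1) * h) =
          Icc 0 ((m : ℝ) * h) ∪ Icc ((m : ℝ) * h) (((m : ℝ) + 1) * h) := by
        rw [Icc_union_Icc_eq_Icc (by positivity) (by nlinarith)]
      push_cast
      rw [hunion]
      exact continuousOn_union_closed isClosed_Icc isClosed_Icc ih hseg

-- derivative
lemma eulerInterp_hasDeriv (hh : 0 < h) {t : ℝ} (ht : 0 ≤ t) :
    HasDerivWithinAt (eulerInterp e x0 h) (e (euler e x0 h ⌊t / h⌋₊)) (Ici t) t := by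
  set i := ⌊t / h⌋₊ with hi
  have hi1 : (i : ℝ) * h ≤ t := by
    rw [← le_div_iff₀ hh]
    exact Nat.floor_le (by positivity)
  have hi2 : t < ((i : ℝ) + 1) * h := by
    rw [← div_lt_iff₀ hh]
    exact_mod_cast Nat.lt_floor_add_one (t / h)
  have haff : HasDerivAt (fun s : ℝ =>
      euler e x0 h i + ((s - (i : ℝ) * h) / h) • (euler e x0 h (i + 1) - euler e x0 h i))
      (e (euler e x0 h i)) t := by
    have h1 : HasDerivAt (fun s : ℝ => (s - (i : ℝ) * h) / h) (1 / h) t := by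
      simpa using ((hasDerivAt_id t).sub_const ((i : ℝ) * h)).div_const h
    have h2 := (h1.smul_const (euler e x0 h (i + 1) - euler e x0 h i)).const_add
      (euler e x0 h i)
    refine h2.congr_deriv ?_
    rw [euler_succ_sub, smul_smul, one_div, inv_mul_cancel₀ hh.ne', one_smul]
  refine haff.hasDerivWithinAt.congr_of_eventuallyEq ?_
    (eulerInterp_eq_seg hh hi1 hi2.le)
  have hmem : Iio (((i : ℝ) + 1) * h) ∈ nhdsWithin t (Ici t) :=
    mem_nhdsWithin_of_mem_nhds (Iio_mem_nhds hi2)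
  filter_upwards [hmem, self_mem_nhdsWithin] with s hs1 hs2
  exact eulerInterp_eq_seg hh (le_trans hi1 hs2) (le_of_lt hs1)

lemma gronwallBound_nonneg' {l M T : ℝ} (hl : 0 ≤ l) (hM : 0 ≤ M) (hT : 0 ≤ T) :
    0 ≤ gronwallBound 0 l (l * M) T := by
  unfold gronwallBound
  split_ifs with hK
  · positivity
  · have h1 : (1 : ℝ) ≤ Real.exp (l * T) := Real.one_le_exp (by positivity)
    have h2 : 0 ≤ l * M / l := by positivity
    nlinarith

lemma gronwallBound_le_scale {l M T h x : ℝ} (hl : 0 ≤ l) (hM : 0 ≤ M) (hh : 0 ≤ h)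
    (hx : 0 ≤ x) (hxT : x ≤ T) :
    gronwallBound 0 l (0 + l * (M * h)) x ≤ h * gronwallBound 0 l (l * M) T := by
  unfold gronwallBound
  split_ifs with hK
  · rw [hK]; simp
  · have hl' : 0 < l := lt_of_le_of_ne hl (Ne.symm hK)
    have c1 : (0 + l * (M * h)) / l = M * h := by rw [zero_add]; field_simp
    have c2 : l * M / l = M := by field_simp
    rw [c1, c2]
    have he1 : Real.exp (l * x) ≤ Real.exp (l * T) :=
      Real.exp_le_exp.2 (mul_le_mul_of_nonneg_left hxT hl)
    have he0 : (1 : ℝ) ≤ Real.exp (l * x) := Real.one_le_exp (by positivity)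
    have key : M * h * (Real.exp (l * x) - 1) ≤ h * (M * (Real.exp (l * T) - 1)) := by
      nlinarith [mul_nonneg (mul_nonneg hM hh) (sub_nonneg.2 he1)]
    simpa using key

set_option maxHeartbeats 1000000 in
lemma euler_close {n : ℕ} (e : EuclideanSpace ℝ (Fin n) → EuclideanSpace ℝ (Fin n))
    (x0 : EuclideanSpace ℝ (Fin n)) (p : ℝ → EuclideanSpace ℝ (Fin n))
    (hLip : LocallyLipschitz e) (hp0 : p 0 = x0)
    (hsol : ∀ t, HasDerivAt p (e (p t)) t) {T ε : ℝ} (hT : 0 < T) (hε : 0 < ε) :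
    ∃ h₀ > (0:ℝ), ∀ h, 0 < h → h < h₀ → ∀ t, 0 ≤ t → t ≤ T →
      ‖eulerInterp e x0 h t - p t‖ < ε := by
  have hpc : Continuous p :=
    Differentiable.continuous (fun t => (hsol t).differentiableAt)
  set P : Set (EuclideanSpace ℝ (Fin n)) := p '' Icc 0 T with hPdef
  have hPc : IsCompact P := isCompact_Icc.image hpc
  set K : Set (EuclideanSpace ℝ (Fin n)) := cthickening 1 P with hKdef
  have hKc : IsCompact K := hPc.cthickening
  have hPK : P ⊆ K := self_subset_cthickening P
  obtain ⟨M₀, hM₀⟩ := hKc.exists_bound_of_continuousOn hLip.continuous.continuousOn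
  set M : ℝ := max M₀ 1 with hMdef
  have hM1 : (1:ℝ) ≤ M := le_max_right _ _
  have hM0 : (0:ℝ) < M := lt_of_lt_of_le one_pos hM1
  have hMb : ∀ x ∈ K, ‖e x‖ ≤ M := fun x hx => le_trans (hM₀ x hx) (le_max_left _ _)
  obtain ⟨L, hLK⟩ := exists_lipschitzOnWith_of_isCompact hLip hKc
  set l : ℝ := (L : ℝ) with hldef
  have hl : 0 ≤ l := L.coe_nonneg
  set C : ℝ := gronwallBound 0 l (l * M) T with hCdef
  have hC0 : 0 ≤ C := gronwallBound_nonneg' hl hM0.le hT.le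
  set ε' : ℝ := min ε 1 with hε'def
  have hε'0 : 0 < ε' := lt_min hε one_pos
  have hε'ε : ε' ≤ ε := min_le_left _ _
  have hε'1 : ε' ≤ 1 := min_le_right _ _
  refine ⟨ε' / (2 * (C + 2 * M + 1)), by positivity, ?_⟩
  intro h hh hh₀
  have hkey : h * C + 2 * (M * h) < ε' / 2 := by
    have h2' := (lt_div_iff₀ (by positivity : (0:ℝ) < 2 * (C + 2 * M + 1))).1 hh₀
    nlinarith
  have hpP : ∀ t, 0 ≤ t → t ≤ T → p t ∈ P := fun t h1 h2 => mem_image_of_mem p ⟨h1, h2⟩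
  have hpl : ∀ s t, 0 ≤ s → s ≤ T → 0 ≤ t → t ≤ T → ‖p s - p t‖ ≤ M * ‖s - t‖ := by
    intro s t hs1 hs2 ht1 ht2
    exact Convex.norm_image_sub_le_of_norm_hasDerivWithin_le
      (f' := fun u => e (p u)) (fun u hu => (hsol u).hasDerivWithinAt)
      (fun u hu => hMb _ (hPK (hpP u hu.1 hu.2))) (convex_Icc 0 T) ⟨ht1, ht2⟩ ⟨hs1, hs2⟩
  have main : ∀ k : ℕ, ∀ t, 0 ≤ t → t ≤ min ((k : ℝ) * h) T →
      dist (p t) (eulerInterp e x0 h t) ≤ h * C := by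
    intro k
    induction k with
    | zero =>
        intro t h1 h2
        have ht0 : t = 0 := le_antisymm (le_trans h2 (by simp)) h1
        subst ht0
        rw [eulerInterp_zero hh, hp0]
        simpa using by positivity
    | succ k ih =>
        by_cases hkT : T ≤ (k : ℝ) * h
        · intro t h1 h2
          have h2' : t ≤ T := le_trans h2 (min_le_right _ _)
          exact ih t h1 (le_min (le_trans h2' hkT) h2')
        · push_neg at hkT
          set b : ℝ := min (((k : ℝ) + 1) * h) T with hbdef
          have hb0 : 0 ≤ b := le_min (by positivity) hT.le
          have hbT : b ≤ T := min_le_right _ _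
          have hbk1 : b ≤ ((k : ℝ) + 1) * h := min_le_left _ _
          have hxk : dist (p ((k : ℝ) * h)) (euler e x0 h k) ≤ h * C := by
            have := ih ((k : ℝ) * h) (by positivity) (le_min le_rfl hkT.le)
            rwa [eulerInterp_nat hh] at this
          have hCle : h * C ≤ 1 := by nlinarith
          have hmem : ∀ t, 0 ≤ t → t ≤ b →
              dist (p t) (eulerInterp e x0 h t) ≤ h * C + 2 * (M * h) := by
            intro t h1 h2
            by_cases hik : t ≤ (k : ℝ) * h
            · have := ih t h1 (le_min hik (le_trans h2 hbT))
              nlinarith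
            · push_neg at hik
              have h2' : t ≤ ((k : ℝ) + 1) * h := le_trans h2 hbk1
              have hxkK : euler e x0 h k ∈ K := by
                apply mem_cthickening_of_dist_le _ (p ((k : ℝ) * h)) _ _
                  (hpP _ (by positivity) hkT.le)
                rw [dist_comm]
                exact le_trans hxk hCle
              have hMk : ‖e (euler e x0 h k)‖ ≤ M := hMb _ hxkK
              have hseg := eulerInterp_dist_le (e := e) (x0 := x0) hh hik.le h2' hMk
              have hd1 : dist (p t) (p ((k : ℝ) * h)) ≤ M * h := by
                rw [dist_eq_norm]
                refine le_trans (hpl t ((k : ℝ) * h) h1 (le_trans h2 hbT) (by positivity) hkT.le) ?_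
                have : ‖t - (k : ℝ) * h‖ ≤ h := by
                  rw [Real.norm_eq_abs, abs_of_nonneg (by linarith)]
                  linarith
                nlinarith
              have hd3 : dist (euler e x0 h k) (eulerInterp e x0 h t) ≤ h * M := by
                rw [dist_comm, dist_eq_norm]
                exact hseg
              calc dist (p t) (eulerInterp e x0 h t)
                  ≤ dist (p t) (p ((k : ℝ) * h)) + dist (p ((k : ℝ) * h)) (euler e x0 h k)
                    + dist (euler e x0 h k) (eulerInterp e x0 h t) := dist_triangle4 _ _ _ _
                _ ≤ M * h + h * C + h * M := by linarith
                _ ≤ h * C + 2 * (M * h) := by nlinarith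
          have hmemK : ∀ t, 0 ≤ t → t ≤ b → eulerInterp e x0 h t ∈ K := by
            intro t h1 h2
            apply mem_cthickening_of_dist_le _ (p t) _ _ (hpP t h1 (le_trans h2 hbT))
            rw [dist_comm]
            refine le_trans (hmem t h1 h2) ?_
            linarith
          have hgcont : ContinuousOn (eulerInterp e x0 h) (Icc 0 b) := by
            refine (eulerInterp_continuousOn (e := e) (x0 := x0) hh (k + 1)).mono ?_
            apply Icc_subset_Icc le_rfl
            push_cast
            exact hbk1
          have hgron := dist_le_of_approx_trajectories_ODE_of_mem
            (v := fun _ => e) (s := fun _ => K) (K := L) (fun _ _ => hLK)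
            (f := p) (f' := fun t => e (p t)) (g := eulerInterp e x0 h)
            (g' := fun t => e (euler e x0 h ⌊t / h⌋₊))
            (a := 0) (b := b) (εf := 0) (εg := l * (M * h)) (δ := 0)
            (hpc.continuousOn)
            (fun t _ => (hsol t).hasDerivWithinAt)
            (fun t _ => by simp)
            (fun t ht' => hPK (hpP t ht'.1 (le_trans ht'.2.le hbT)))
            hgcont
            (fun t ht' => eulerInterp_hasDeriv hh ht'.1)
            (fun t ht' => by
              have hi1 : (⌊t / h⌋₊ : ℝ) * h ≤ t := by
                rw [← le_div_iff₀ hh]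
                exact Nat.floor_le (div_nonneg ht'.1 hh.le)
              have hi2 : t < ((⌊t / h⌋₊ : ℝ) + 1) * h := by
                rw [← div_lt_iff₀ hh]
                exact_mod_cast Nat.lt_floor_add_one (t / h)
              have hxiK : euler e x0 h ⌊t / h⌋₊ ∈ K := by
                rw [← eulerInterp_nat (e := e) (x0 := x0) hh]
                exact hmemK _ (by positivity) (le_trans hi1 ht'.2.le)
              have hintK : eulerInterp e x0 h t ∈ K := hmemK t ht'.1 ht'.2.le
              have hdist : dist (euler e x0 h ⌊t / h⌋₊) (eulerInterp e x0 h t) ≤ M * h := by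
                rw [dist_comm, dist_eq_norm]
                refine le_trans (eulerInterp_dist_le hh hi1 hi2.le (hMb _ hxiK)) ?_
                linarith [mul_comm h M]
              calc dist (e (euler e x0 h ⌊t / h⌋₊)) (e (eulerInterp e x0 h t))
                  ≤ l * dist (euler e x0 h ⌊t / h⌋₊) (eulerInterp e x0 h t) :=
                    hLK.dist_le_mul _ hxiK _ hintK
                _ ≤ l * (M * h) := mul_le_mul_of_nonneg_left hdist hl)
            (fun t ht' => hmemK t ht'.1 ht'.2.le)
            (by rw [hp0, eulerInterp_zero hh]; simp)
          intro t h1 h2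
          have h2' : t ≤ b := by
            rw [hbdef]
            push_cast at h2
            exact h2
          have hg := hgron t ⟨h1, h2'⟩
          refine le_trans hg ?_
          rw [sub_zero]
          exact gronwallBound_le_scale hl hM0.le hh.le h1 (le_trans h2' hbT)
  intro t h1 h2
  set k : ℕ := ⌈T / h⌉₊ with hkdef
  have hTk : T ≤ (k : ℝ) * h := by
    rw [← div_le_iff₀ hh]
    exact Nat.le_ceil _
  have hfin := main k t h1 (le_min (le_trans h2 hTk) h2)
  rw [dist_comm, dist_eq_norm] at hfin
  refine lt_of_le_of_lt hfin ?_
  nlinarith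

-- ### trace/event lemmas

lemma stClose_of_norm_lt {n : ℕ} {ε : ℝ} {a b : EuclideanSpace ℝ (Fin n)}
    (h : ‖a - b‖ < ε) : stClose ε a b :=
  fun i => lt_of_le_of_lt (euclid_abs_sub_le a b i) h

lemma evClose_mono {n : ℕ} {ε δ : ℝ} (hεδ : ε ≤ δ)
    {a b : Ev (EuclideanSpace ℝ (Fin n))} (hab : evClose ε a b) : evClose δ a b := by
  cases a with
  | comm c dir v =>
      cases b with
      | comm => obtain ⟨h1, h2, h3⟩ := hab; exact ⟨h1, h2, lt_of_lt_of_le h3 hεδ⟩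
      | wait => exact hab.elim
  | wait d1 p1 r1 =>
      cases b with
      | comm => exact hab.elim
      | wait =>
          obtain ⟨h1, h2, h3⟩ := hab
          exact ⟨lt_of_lt_of_le h1 hεδ,
            fun t ht1 ht2 => lt_of_lt_of_le (h2 t ht1 ht2) hεδ, h3⟩

lemma trClose_mono {n : ℕ} {ε δ : ℝ} (hεδ : ε ≤ δ)
    {l l' : List (Ev (EuclideanSpace ℝ (Fin n)))} (h : trClose ε l l') : trClose δ l l' :=
  h.imp (fun _ _ hab => evClose_mono hεδ hab)

lemma evClose_refl {n : ℕ} {ε : ℝ} (hε : 0 < ε) (a : Ev (EuclideanSpace ℝ (Fin n))) :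
    evClose ε a a := by
  cases a with
  | comm c dir v => exact ⟨rfl, rfl, by simpa using hε⟩
  | wait d p r => exact ⟨by simpa using hε, fun t _ _ => by simpa using hε, rfl⟩

lemma trClose_refl {n : ℕ} {ε : ℝ} (hε : 0 < ε) (l : List (Ev (EuclideanSpace ℝ (Fin n)))) :
    trClose ε l l :=
  List.forall₂_same.2 fun a _ => evClose_refl hε a

lemma forall₂_snoc_left {α β : Type*} {R : α → β → Prop} :
    ∀ {l : List α} {a : α} {l' : List β}, List.Forall₂ R (l ++ [a]) l' →
      ∃ l₂ b, l' = l₂ ++ [b] ∧ List.Forall₂ R l l₂ ∧ R a b := by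
  intro l
  induction l with
  | nil =>
      intro a l' h
      cases h with
      | cons hab hnil =>
          cases hnil
          exact ⟨[], _, rfl, List.Forall₂.nil, hab⟩
  | cons x xs ih =>
      intro a l' h
      cases h with
      | cons hxy htail =>
          obtain ⟨l₂, b, rfl, h1, h2⟩ := ih htail
          exact ⟨_ :: l₂, b, rfl, List.Forall₂.cons hxy h1, h2⟩

/-- Equivalence of the continuous precondition (CP) and its discrete
version (DP) for open `B` and open `Q`. -/
theorem CP_iff_DP {n : ℕ}
    (e : EuclideanSpace ℝ (Fin n) → EuclideanSpace ℝ (Fin n))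
    (x0 : EuclideanSpace ℝ (Fin n))
    (p : ℝ → EuclideanSpace ℝ (Fin n))
    (B : EuclideanSpace ℝ (Fin n) → Prop)
    (Q : EuclideanSpace ℝ (Fin n) → List (Ev (EuclideanSpace ℝ (Fin n))) → Prop)
    (tr : List (Ev (EuclideanSpace ℝ (Fin n))))
    (hLip : LocallyLipschitz e)
    (hp0 : p 0 = x0)
    (hsol : ∀ t, HasDerivAt p (e (p t)) t)
    (hBopen : ∀ s, B s → ∃ ε > (0:ℝ), ∀ s', stClose ε s s' → B s')
    (hQopen : ∀ s tr', Q s tr' →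
      ∃ ε > (0:ℝ), ∀ s' tr'', stClose ε s s' → trClose ε tr' tr'' → Q s' tr'') :
    -- (CP)
    (∀ d > (0:ℝ), (∀ t, 0 ≤ t → t < d → B (p t)) → ¬ B (p d) →
        Q (p d) (tr ++ [Ev.wait d p ∅]))
    ↔
    -- (DP)
    (∀ T > (0:ℝ),
      (∀ t, 0 ≤ t → t < T →
        ∃ ε₀ > (0:ℝ), ∀ ε, 0 < ε → ε < ε₀ →
          ∃ h₀ > (0:ℝ), ∀ h, 0 < h → h < h₀ →
            inUminusB ε B (eulerInterp e x0 h t)) →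
      ∃ ε₀ > (0:ℝ), ∀ ε, 0 < ε → ε < ε₀ →
        ∃ h₀ > (0:ℝ), ∀ h, 0 < h → h < h₀ →
          (¬ inUminusB ε B (eulerInterp e x0 h T) →
            inUminusQ ε Q (eulerInterp e x0 h T)
              (tr ++ [Ev.wait T (eulerInterp e x0 h) ∅]))) := by
  constructor
  · -- CP → DP
    intro cp T hT hyp
    have hBp : ∀ t, 0 ≤ t → t < T → B (p t) := by
      intro t ht1 ht2
      obtain ⟨ε₀, hε₀, hB⟩ := hyp t ht1 ht2
      obtain ⟨h₁, hh₁, hUB⟩ := hB (ε₀ / 2) (half_pos hε₀) (half_lt_self hε₀)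
      obtain ⟨h₀, hh₀, hconv⟩ := euler_close e x0 p hLip hp0 hsol hT (half_pos hε₀)
      set hc : ℝ := min h₀ h₁ / 2 with hcdef
      have hc0 : 0 < hc := half_pos (lt_min hh₀ hh₁)
      have hch₀ : hc < h₀ := lt_of_lt_of_le (half_lt_self (lt_min hh₀ hh₁)) (min_le_left _ _)
      have hch₁ : hc < h₁ := lt_of_lt_of_le (half_lt_self (lt_min hh₀ hh₁)) (min_le_right _ _)
      exact hUB hc hc0 hch₁ (p t)
        (stClose_of_norm_lt (hconv hc hc0 hch₀ t ht1 ht2.le))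
    by_cases hBT : B (p T)
    · obtain ⟨δ, hδ, hball⟩ := hBopen _ hBT
      refine ⟨δ / 2, by positivity, ?_⟩
      intro ε hε1 hε2
      obtain ⟨h₀, hh₀, hconv⟩ := euler_close e x0 p hLip hp0 hsol hT (half_pos hδ)
      refine ⟨h₀, hh₀, ?_⟩
      intro h hh1 hh2 hnot
      exfalso
      apply hnot
      intro s' hs'
      apply hball
      intro i
      have hn : ‖eulerInterp e x0 h T - p T‖ < δ / 2 := hconv h hh1 hh2 T hT.le le_rfl
      have h1 : |p T i - eulerInterp e x0 h T i| < δ / 2 :=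
        lt_of_le_of_lt (euclid_abs_sub_le _ _ i) (by rwa [norm_sub_rev] at hn)
      have h2 : |eulerInterp e x0 h T i - s' i| < ε := hs' i
      have := abs_sub_le (p T i) (eulerInterp e x0 h T i) (s' i)
      linarith
    · have hQ : Q (p T) (tr ++ [Ev.wait T p ∅]) := cp T hT hBp hBT
      obtain ⟨δ, hδ, hQball⟩ := hQopen _ _ hQ
      refine ⟨δ / 2, by positivity, ?_⟩
      intro ε hε1 hε2
      obtain ⟨h₀, hh₀, hconv⟩ := euler_close e x0 p hLip hp0 hsol hT (half_pos hδ)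
      refine ⟨h₀, hh₀, ?_⟩
      intro h hh1 hh2 _hnot
      intro s' tr' hs' htr'
      have hcv : ∀ t, 0 ≤ t → t ≤ T → ‖eulerInterp e x0 h t - p t‖ < δ / 2 :=
        hconv h hh1 hh2
      apply hQball s' tr'
      · intro i
        have h1 : |p T i - eulerInterp e x0 h T i| < δ / 2 :=
          lt_of_le_of_lt (euclid_abs_sub_le _ _ i)
            (by rw [norm_sub_rev]; exact hcv T hT.le le_rfl)
        have h2 : |eulerInterp e x0 h T i - s' i| < ε := hs' i
        have := abs_sub_le (p T i) (eulerInterp e x0 h T i) (s' i)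
        linarith
      · obtain ⟨tr₂, ev', rfl, hpre, hev⟩ := forall₂_snoc_left htr'
        refine List.rel_append (trClose_mono (by linarith) hpre) ?_
        refine List.Forall₂.cons ?_ List.Forall₂.nil
        cases ev' with
        | comm => exact hev.elim
        | wait d' p' rdy' =>
            obtain ⟨he1, he2, he3⟩ := hev
            refine ⟨by linarith [he1], ?_, he3⟩
            intro t ht1 ht2
            have htT : t < T := lt_of_lt_of_le ht2 (min_le_left _ _)
            have hn1 : ‖p t - eulerInterp e x0 h t‖ < δ / 2 := by
              rw [norm_sub_rev]; exact hcv t ht1.le htT.le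
            have hn2 : ‖eulerInterp e x0 h t - p' t‖ < ε := he2 t ht1 ht2
            calc ‖p t - p' t‖ ≤ ‖p t - eulerInterp e x0 h t‖ + ‖eulerInterp e x0 h t - p' t‖ :=
                  norm_sub_le_norm_sub_add_norm_sub _ _ _
              _ < δ := by linarith
  · -- DP → CP
    intro dp d hd hB hnB
    have hyp : ∀ t, 0 ≤ t → t < d →
        ∃ ε₀ > (0:ℝ), ∀ ε, 0 < ε → ε < ε₀ →
          ∃ h₀ > (0:ℝ), ∀ h, 0 < h → h < h₀ →
            inUminusB ε B (eulerInterp e x0 h t) := by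
      intro t ht1 ht2
      obtain ⟨δ, hδ, hball⟩ := hBopen _ (hB t ht1 ht2)
      refine ⟨δ / 2, by positivity, ?_⟩
      intro ε hε1 hε2
      obtain ⟨h₀, hh₀, hconv⟩ := euler_close e x0 p hLip hp0 hsol hd (half_pos hδ)
      refine ⟨h₀, hh₀, ?_⟩
      intro h hh1 hh2
      intro s' hs'
      apply hball
      intro i
      have h1 : |p t i - eulerInterp e x0 h t i| < δ / 2 :=
        lt_of_le_of_lt (euclid_abs_sub_le _ _ i)
          (by rw [norm_sub_rev]; exact hconv h hh1 hh2 t ht1 ht2.le)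
      have h2 : |eulerInterp e x0 h t i - s' i| < ε := hs' i
      have := abs_sub_le (p t i) (eulerInterp e x0 h t i) (s' i)
      linarith
    obtain ⟨ε₀, hε₀, hdp⟩ := dp d hd hyp
    obtain ⟨h₀, hh₀, hdp2⟩ := hdp (ε₀ / 2) (half_pos hε₀) (half_lt_self hε₀)
    obtain ⟨h₁, hh₁, hconv⟩ := euler_close e x0 p hLip hp0 hsol hd (half_pos hε₀)
    set hc : ℝ := min h₀ h₁ / 2 with hcdef
    have hc0 : 0 < hc := half_pos (lt_min hh₀ hh₁)
    have hch₀ : hc < h₀ := lt_of_lt_of_le (half_lt_self (lt_min hh₀ hh₁)) (min_le_left _ _)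
    have hch₁ : hc < h₁ := lt_of_lt_of_le (half_lt_self (lt_min hh₀ hh₁)) (min_le_right _ _)
    have hcv : ∀ t, 0 ≤ t → t ≤ d → ‖eulerInterp e x0 hc t - p t‖ < ε₀ / 2 :=
      hconv hc hc0 hch₁
    have hnotU : ¬ inUminusB (ε₀ / 2) B (eulerInterp e x0 hc d) := by
      intro hU
      exact hnB (hU (p d) (stClose_of_norm_lt (hcv d hd.le le_rfl)))
    have hQ := hdp2 hc hc0 hch₀ hnotU
    apply hQ (p d) (tr ++ [Ev.wait d p ∅])
      (stClose_of_norm_lt (hcv d hd.le le_rfl))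
    refine List.rel_append (trClose_refl (half_pos hε₀) tr) ?_
    refine List.Forall₂.cons ?_ List.Forall₂.nil
    refine ⟨by simpa using half_pos hε₀, ?_, rfl⟩
    intro t ht1 ht2
    rw [min_self] at ht2
    exact hcv t ht1.le ht2.le
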